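/- arXiv:0709.1341 — 2 statements merged into one kernel-verified Lean document; each statement's English description precedes it below -/
import Mathlib

section
/- The lattice L satisfies L = {x + x̃ | x ∈ 𝕀}, i.e., L is the image of the icosian ring 𝕀 under the map φ₊(x) = x + x̃. -/
noncomputable section

open Quaternion Classical

/-- √5 as a real number. -/
def sqrt5 : ℝ := Real.sqrt 5

/-- The golden ratio τ = (1+√5)/2. -/
def gold : ℝ := (1 + sqrt5) / 2

/-- membership in K = ℚ(√5) ⊆ ℝ. -/
def inK (x : ℝ) : Prop := ∃ a b : ℚ, x = (a : ℝ) + (b : ℝ) * sqrt5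

/-- The nontrivial field automorphism of K = ℚ(√5) (√5 ↦ -√5), extended by the
identity outside K.  Since `1, √5` are linearly independent over ℚ, the rational
coordinates of an element of K are unique, so this is well defined. -/
noncomputable def conjK (x : ℝ) : ℝ :=
  if h : ∃ a b : ℚ, x = (a : ℝ) + (b : ℝ) * sqrt5 then
    (h.choose : ℝ) - (h.choose_spec.choose : ℝ) * sqrt5
  else x

/-- membership in 𝔬 = ℤ[τ], the ring of integers of ℚ(√5). -/
def inO (x : ℝ) : Prop := ∃ m n : ℤ, x = (m : ℝ) + (n : ℝ) * gold

/-- The twist map (a,b,c,d) ↦ (a',b',d',c') on quaternions. -/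
noncomputable def twist (q : ℍ[ℝ]) : ℍ[ℝ] :=
  ⟨conjK q.re, conjK q.imI, conjK q.imK, conjK q.imJ⟩

/-- reduced norm nr(q) = q q̄ (as a real number). -/
def nr (q : ℍ[ℝ]) : ℝ := (q * star q).re

/-- reduced trace tr(q) = q + q̄ (as a real number). -/
def trq (q : ℍ[ℝ]) : ℝ := (q + star q).re

/-- generators of the icosian ring. -/
def e₁ : ℍ[ℝ] := ⟨1, 0, 0, 0⟩
def e₂ : ℍ[ℝ] := ⟨0, 1, 0, 0⟩
def e₃ : ℍ[ℝ] := ⟨1/2, 1/2, 1/2, 1/2⟩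
def e₄ : ℍ[ℝ] := ⟨(1 - gold)/2, gold/2, 0, 1/2⟩

/-- membership in the icosian ring 𝕀, the 𝔬-span of the four generators. -/
def inI (q : ℍ[ℝ]) : Prop :=
  ∃ c₁ c₂ c₃ c₄ : ℝ, inO c₁ ∧ inO c₂ ∧ inO c₃ ∧ inO c₄ ∧
    q = c₁ • e₁ + c₂ • e₂ + c₃ • e₃ + c₄ • e₄

/-- generators of the copy L of the root lattice A₄. -/
def g₁ : ℍ[ℝ] := ⟨1, 0, 0, 0⟩
def g₂ : ℍ[ℝ] := ⟨-1/2, 1/2, 1/2, 1/2⟩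
def g₃ : ℍ[ℝ] := ⟨0, -1, 0, 0⟩
def g₄ : ℍ[ℝ] := ⟨0, 1/2, (gold - 1)/2, -gold/2⟩

/-- L, the ℤ-span of the four generators, as an additive subgroup of ℍ(ℝ). -/
def Lgrp : AddSubgroup ℍ[ℝ] := AddSubgroup.closure {g₁, g₂, g₃, g₄}

/-- `q` is a primitive icosian. -/
def PrimitiveIcosian (q : ℍ[ℝ]) : Prop :=
  inI q ∧ ∀ α : ℝ, inK α → inI (α • q) → inO α

/-- `q` is admissible with |q q̃| = n. -/
def Admissible (q : ℍ[ℝ]) (n : ℕ) : Prop :=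
  nr q * conjK (nr q) = (n : ℝ) ^ 2

/-- The additive map x ↦ r • (q x q̃) on ℍ(ℝ). -/
noncomputable def rotHom (q : ℍ[ℝ]) (r : ℝ) : ℍ[ℝ] →+ ℍ[ℝ] where
  toFun x := r • (q * x * twist q)
  map_zero' := by simp
  map_add' x y := by
    simp [mul_add, add_mul, smul_add]

/-- Commensurateness of two additive subgroups of ℍ(ℝ). -/
def Commensurate (A B : AddSubgroup ℍ[ℝ]) : Prop :=
  (A ⊓ B).relIndex A ≠ 0 ∧ (A ⊓ B).relIndex B ≠ 0

/-- Image of an additive subgroup under a linear isometry of ℍ(ℝ) ≅ ℝ⁴. -/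
def mapIso (R : ℍ[ℝ] ≃ₗᵢ[ℝ] ℍ[ℝ]) (A : AddSubgroup ℍ[ℝ]) : AddSubgroup ℍ[ℝ] :=
  A.map (R.toLinearEquiv.toLinearMap.toAddMonoidHom)

/-- `R` lies in SO(4,ℝ). -/
def IsRotation (R : ℍ[ℝ] ≃ₗᵢ[ℝ] ℍ[ℝ]) : Prop :=
  LinearMap.det (R.toLinearEquiv.toLinearMap) = 1



lemma sqrt5_irr : Irrational sqrt5 := by
  have := (by norm_num : Nat.Prime 5).irrational_sqrt
  simpa [sqrt5] using this

lemma sqrt5_sq : sqrt5 * sqrt5 = 5 := Real.mul_self_sqrt (by norm_num)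

lemma gold_sq' : gold * gold = gold + 1 := by
  unfold gold; linear_combination (1/4 : ℝ) * sqrt5_sq

lemma rat_eq_of (a b c d : ℚ) (h : (a:ℝ) + b * sqrt5 = c + d * sqrt5) : a = c ∧ b = d := by
  by_cases hbd : b = d
  · subst hbd
    have : (a:ℝ) = c := by linarith
    exact ⟨by exact_mod_cast this, rfl⟩
  · exfalso
    apply sqrt5_irr
    refine ⟨(a - c) / (d - b), ?_⟩
    have hdb : ((d:ℝ) - b) ≠ 0 := by
      intro h0
      apply hbd
      have : (b:ℝ) = d := by linarith
      exact_mod_cast this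
    push_cast
    field_simp
    linarith

lemma conjK_eval (a b : ℚ) : conjK ((a:ℝ) + (b:ℝ) * sqrt5) = (a:ℝ) - (b:ℝ) * sqrt5 := by
  have h : ∃ a' b' : ℚ, ((a:ℝ) + (b:ℝ) * sqrt5) = (a':ℝ) + (b':ℝ) * sqrt5 := ⟨a, b, rfl⟩
  rw [conjK, dif_pos h]
  obtain ⟨h1, h2⟩ := rat_eq_of a b h.choose h.choose_spec.choose h.choose_spec.choose_spec
  have ha : (h.choose : ℝ) = a := by exact_mod_cast h1.symm
  have hb : (h.choose_spec.choose : ℝ) = b := by exact_mod_cast h2.symm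
  linear_combination ha - sqrt5 * hb

lemma conjK_gold (p q : ℚ) : conjK ((p:ℝ) + (q:ℝ) * gold) = (p:ℝ) + q - q * gold := by
  have h1 : (p:ℝ) + (q:ℝ) * gold = ((p + q/2 : ℚ):ℝ) + ((q/2 : ℚ):ℝ) * sqrt5 := by
    push_cast; unfold gold; ring
  rw [h1, conjK_eval]
  push_cast; unfold gold; ring

lemma twist_mk (p₁ q₁ p₂ q₂ p₃ q₃ p₄ q₄ : ℚ) :
    twist ⟨(p₁:ℝ) + q₁ * gold, (p₂:ℝ) + q₂ * gold, (p₃:ℝ) + q₃ * gold, (p₄:ℝ) + q₄ * gold⟩ =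
      ⟨(p₁:ℝ) + q₁ - q₁ * gold, (p₂:ℝ) + q₂ - q₂ * gold,
       (p₄:ℝ) + q₄ - q₄ * gold, (p₃:ℝ) + q₃ - q₃ * gold⟩ := by
  show (⟨conjK ((p₁:ℝ) + q₁ * gold), conjK ((p₂:ℝ) + q₂ * gold),
         conjK ((p₄:ℝ) + q₄ * gold), conjK ((p₃:ℝ) + q₃ * gold)⟩ : ℍ[ℝ]) = _
  rw [conjK_gold, conjK_gold, conjK_gold, conjK_gold]

lemma phi_formula (m₁ n₁ m₂ n₂ m₃ n₃ m₄ n₄ : ℤ) :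
    (((m₁:ℝ) + n₁ * gold) • e₁ + ((m₂:ℝ) + n₂ * gold) • e₂ +
     ((m₃:ℝ) + n₃ * gold) • e₃ + ((m₄:ℝ) + n₄ * gold) • e₄) +
    twist (((m₁:ℝ) + n₁ * gold) • e₁ + ((m₂:ℝ) + n₂ * gold) • e₂ +
     ((m₃:ℝ) + n₃ * gold) • e₃ + ((m₄:ℝ) + n₄ * gold) • e₄) =
    ((2*m₁+n₁+2*m₃+n₃+m₄-n₄ : ℤ) : ℝ) • g₁ + ((2*m₃+n₃+m₄ : ℤ) : ℝ) • g₂ +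
    ((-2*m₂-n₂-2*n₄ : ℤ) : ℝ) • g₃ + ((-n₄ : ℤ) : ℝ) • g₄ := by
  have hx : ((m₁:ℝ) + n₁ * gold) • e₁ + ((m₂:ℝ) + n₂ * gold) • e₂ +
      ((m₃:ℝ) + n₃ * gold) • e₃ + ((m₄:ℝ) + n₄ * gold) • e₄ =
      (⟨((m₁ + m₃/2 + (m₄ - n₄)/2 : ℚ):ℝ) + ((n₁ + n₃/2 - m₄/2 : ℚ):ℝ) * gold,
        ((m₂ + m₃/2 + n₄/2 : ℚ):ℝ) + ((n₂ + n₃/2 + (m₄ + n₄)/2 : ℚ):ℝ) * gold,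
        ((m₃/2 : ℚ):ℝ) + ((n₃/2 : ℚ):ℝ) * gold,
        (((m₃ + m₄)/2 : ℚ):ℝ) + (((n₃ + n₄)/2 : ℚ):ℝ) * gold⟩ : ℍ[ℝ]) := by
    ext
    · show ((m₁:ℝ) + n₁ * gold) * 1 + ((m₂:ℝ) + n₂ * gold) * 0 +
        ((m₃:ℝ) + n₃ * gold) * (1/2) + ((m₄:ℝ) + n₄ * gold) * ((1 - gold)/2) = _
      push_cast
      linear_combination (-(n₄:ℝ)/2) * gold_sq'
    · show ((m₁:ℝ) + n₁ * gold) * 0 + ((m₂:ℝ) + n₂ * gold) * 1 +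
        ((m₃:ℝ) + n₃ * gold) * (1/2) + ((m₄:ℝ) + n₄ * gold) * (gold/2) = _
      push_cast
      linear_combination ((n₄:ℝ)/2) * gold_sq'
    · show ((m₁:ℝ) + n₁ * gold) * 0 + ((m₂:ℝ) + n₂ * gold) * 0 +
        ((m₃:ℝ) + n₃ * gold) * (1/2) + ((m₄:ℝ) + n₄ * gold) * 0 = _
      push_cast; ring
    · show ((m₁:ℝ) + n₁ * gold) * 0 + ((m₂:ℝ) + n₂ * gold) * 0 +
        ((m₃:ℝ) + n₃ * gold) * (1/2) + ((m₄:ℝ) + n₄ * gold) * (1/2) = _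
      push_cast; ring
  rw [hx, twist_mk]
  have hadd : ∀ a b c d a' b' c' d' : ℝ, @HAdd.hAdd ℍ[ℝ] ℍ[ℝ] ℍ[ℝ] _ ⟨a, b, c, d⟩ ⟨a', b', c', d'⟩ =
      ⟨a + a', b + b', c + c', d + d'⟩ := fun _ _ _ _ _ _ _ _ => rfl
  ext <;> simp only [Quaternion.re_add, Quaternion.imI_add, Quaternion.imJ_add,
    Quaternion.imK_add, Quaternion.re_smul, Quaternion.imI_smul, Quaternion.imJ_smul,
    Quaternion.imK_smul, smul_eq_mul, hadd] <;> simp only [g₁, g₂, g₃, g₄] <;> push_cast <;> ring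


theorem L_eq_phiPlus_of_icosians :
    ∀ q : ℍ[ℝ], q ∈ Lgrp ↔ ∃ x : ℍ[ℝ], inI x ∧ q = x + twist x := by
  intro q
  constructor
  · intro hq
    have key : ∃ a₁ a₂ a₃ a₄ : ℤ,
        q = (a₁:ℝ) • g₁ + (a₂:ℝ) • g₂ + (a₃:ℝ) • g₃ + (a₄:ℝ) • g₄ := by
      induction hq using AddSubgroup.closure_induction with
      | mem x hx =>
        rcases hx with h | h | h | h
        · exact ⟨1, 0, 0, 0, by rw [h]; push_cast; module⟩
        · exact ⟨0, 1, 0, 0, by rw [h]; push_cast; module⟩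
        · exact ⟨0, 0, 1, 0, by rw [h]; push_cast; module⟩
        · rw [Set.mem_singleton_iff] at h
          exact ⟨0, 0, 0, 1, by rw [h]; push_cast; module⟩
      | zero => exact ⟨0, 0, 0, 0, by push_cast; module⟩
      | add x y _ _ ihx ihy =>
        obtain ⟨a₁, a₂, a₃, a₄, hx⟩ := ihx
        obtain ⟨b₁, b₂, b₃, b₄, hy⟩ := ihy
        exact ⟨a₁ + b₁, a₂ + b₂, a₃ + b₃, a₄ + b₄, by rw [hx, hy]; push_cast; module⟩
      | neg x _ ihx =>
        obtain ⟨a₁, a₂, a₃, a₄, hx⟩ := ihx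
        exact ⟨-a₁, -a₂, -a₃, -a₄, by rw [hx]; push_cast; module⟩
    obtain ⟨a₁, a₂, a₃, a₄, hqa⟩ := key
    refine ⟨(((0:ℤ):ℝ) + ((a₁ - a₂ - a₄ : ℤ):ℝ) * gold) • e₁ +
            (((0:ℤ):ℝ) + ((-a₃ + 2 * a₄ : ℤ):ℝ) * gold) • e₂ +
            (((0:ℤ):ℝ) + ((0:ℤ):ℝ) * gold) • e₃ +
            (((a₂:ℤ):ℝ) + ((-a₄ : ℤ):ℝ) * gold) • e₄, ?_, ?_⟩
    · exact ⟨_, _, _, _, ⟨0, a₁ - a₂ - a₄, rfl⟩, ⟨0, -a₃ + 2 * a₄, rfl⟩,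
        ⟨0, 0, rfl⟩, ⟨a₂, -a₄, rfl⟩, rfl⟩
    · rw [phi_formula, hqa]
      push_cast
      module
  · rintro ⟨x, ⟨c₁, c₂, c₃, c₄, hc₁, hc₂, hc₃, hc₄, hx⟩, hq⟩
    obtain ⟨m₁, n₁, rfl⟩ := hc₁
    obtain ⟨m₂, n₂, rfl⟩ := hc₂
    obtain ⟨m₃, n₃, rfl⟩ := hc₃
    obtain ⟨m₄, n₄, rfl⟩ := hc₄
    subst hx
    rw [hq, phi_formula]
    have hg : ∀ (a : ℤ) (g : ℍ[ℝ]), g ∈ ({g₁, g₂, g₃, g₄} : Set ℍ[ℝ]) →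
        (a:ℝ) • g ∈ Lgrp := by
      intro a g hgmem
      rw [Int.cast_smul_eq_zsmul]
      exact AddSubgroup.zsmul_mem _ (AddSubgroup.subset_closure hgmem) a
    exact add_mem (add_mem (add_mem (hg _ _ (by simp)) (hg _ _ (by simp)))
      (hg _ _ (by simp))) (hg _ _ (by simp))


end
end

section
/- Let q ∈ 𝕀 and γ ∈ K. Then q ∈ γ𝕀 if and only if tr(qȳ) ∈ γ𝔬 for all y ∈ 𝕀. -/
noncomputable section

open Quaternion Classical

lemma goldSq : gold ^ 2 = gold + 1 := by
  have h5 : sqrt5 ^ 2 = 5 := Real.sq_sqrt (by norm_num)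
  unfold gold
  linear_combination h5 / 4

lemma inO_zero : inO 0 := ⟨0, 0, by simp⟩
lemma inO_one : inO 1 := ⟨1, 0, by simp⟩
lemma inO_two : inO 2 := ⟨2, 0, by norm_num⟩
lemma inO_gold : inO gold := ⟨0, 1, by simp⟩

lemma inO_add {x y : ℝ} (hx : inO x) (hy : inO y) : inO (x + y) := by
  obtain ⟨m, n, rfl⟩ := hx; obtain ⟨m', n', rfl⟩ := hy
  exact ⟨m + m', n + n', by push_cast; ring⟩

lemma inO_neg {x : ℝ} (hx : inO x) : inO (-x) := by
  obtain ⟨m, n, rfl⟩ := hx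
  exact ⟨-m, -n, by push_cast; ring⟩

lemma inO_sub {x y : ℝ} (hx : inO x) (hy : inO y) : inO (x - y) := by
  rw [sub_eq_add_neg]; exact inO_add hx (inO_neg hy)

lemma inO_mul {x y : ℝ} (hx : inO x) (hy : inO y) : inO (x * y) := by
  obtain ⟨m, n, rfl⟩ := hx; obtain ⟨m', n', rfl⟩ := hy
  refine ⟨m * m' + n * n', m * n' + m' * n + n * n', ?_⟩
  push_cast
  linear_combination ((n : ℝ) * (n' : ℝ)) * goldSq

lemma trq_mul_star (a b : ℍ[ℝ]) :
    trq (a * star b) = 2 * (a.re * b.re + a.imI * b.imI + a.imJ * b.imJ + a.imK * b.imK) := by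
  simp [trq, Quaternion.re_mul]
  ring

theorem mem_smul_icosians_iff_trace (q : ℍ[ℝ]) (γ : ℝ) (hq : inI q) (hγ : inK γ) :
    (∃ x : ℍ[ℝ], inI x ∧ q = γ • x) ↔
      (∀ y : ℍ[ℝ], inI y → ∃ c : ℝ, inO c ∧ trq (q * star y) = γ * c) := by
  constructor
  · rintro ⟨x, ⟨c₁, c₂, c₃, c₄, hc₁, hc₂, hc₃, hc₄, rfl⟩, rfl⟩
    rintro y ⟨d₁, d₂, d₃, d₄, hd₁, hd₂, hd₃, hd₄, rfl⟩
    refine ⟨2*(c₁*d₁) + 2*(c₂*d₂) + 2*(c₃*d₃) + 2*(c₄*d₄) + (c₁*d₃ + c₃*d₁)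
        + (1 - gold)*(c₁*d₄ + c₄*d₁) + (c₂*d₃ + c₃*d₂) + gold*(c₂*d₄ + c₄*d₂)
        + (c₃*d₄ + c₄*d₃), ?_, ?_⟩
    · repeat
        first
        | exact hc₁ | exact hc₂ | exact hc₃ | exact hc₄
        | exact hd₁ | exact hd₂ | exact hd₃ | exact hd₄
        | exact inO_gold | exact inO_two | exact inO_one
        | apply inO_add
        | apply inO_sub
        | apply inO_mul
        | apply inO_neg
    · rw [trq_mul_star]
      simp only [Quaternion.re_add, Quaternion.re_smul, Quaternion.imI_add, Quaternion.imI_smul, Quaternion.imJ_add, Quaternion.imJ_smul, Quaternion.imK_add, Quaternion.imK_smul]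
      simp [e₁, e₂, e₃, e₄]
      linear_combination (γ * (c₄ * d₄)) * goldSq
  · intro h
    obtain ⟨c₁, c₂, c₃, c₄, hc₁, hc₂, hc₃, hc₄, rfl⟩ := hq
    have hI₁ : inI e₁ := ⟨1, 0, 0, 0, inO_one, inO_zero, inO_zero, inO_zero, by simp⟩
    have hI₂ : inI e₂ := ⟨0, 1, 0, 0, inO_zero, inO_one, inO_zero, inO_zero, by simp⟩
    have hI₃ : inI e₃ := ⟨0, 0, 1, 0, inO_zero, inO_zero, inO_one, inO_zero, by simp⟩
    have hI₄ : inI e₄ := ⟨0, 0, 0, 1, inO_zero, inO_zero, inO_zero, inO_one, by simp⟩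
    obtain ⟨d₁, hd₁, ht₁⟩ := h e₁ hI₁
    obtain ⟨d₂, hd₂, ht₂⟩ := h e₂ hI₂
    obtain ⟨d₃, hd₃, ht₃⟩ := h e₃ hI₃
    obtain ⟨d₄, hd₄, ht₄⟩ := h e₄ hI₄
    rw [trq_mul_star] at ht₁ ht₂ ht₃ ht₄
    simp only [Quaternion.re_add, Quaternion.re_smul, Quaternion.imI_add, Quaternion.imI_smul, Quaternion.imJ_add, Quaternion.imJ_smul, Quaternion.imK_add, Quaternion.imK_smul] at ht₁ ht₂ ht₃ ht₄
    simp [e₁, e₂, e₃, e₄] at ht₁ ht₂ ht₃ ht₄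
    have t₁ : 2*c₁ + c₃ + (1 - gold)*c₄ = γ * d₁ := by linear_combination ht₁
    have t₂ : 2*c₂ + c₃ + gold*c₄ = γ * d₂ := by linear_combination ht₂
    have t₃ : c₁ + c₂ + 2*c₃ + c₄ = γ * d₃ := by linear_combination ht₃
    have t₄ : (1 - gold)*c₁ + gold*c₂ + c₃ + 2*c₄ = γ * d₄ := by
      linear_combination ht₄ - c₄ * goldSq
    set b₁ : ℝ := 2*d₁ - d₂ - gold*d₃ + (-1 + 2*gold)*d₄ with hb₁def
    set b₂ : ℝ := -d₁ + 2*d₂ + (-1 + gold)*d₃ + (1 - 2*gold)*d₄ with hb₂def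
    set b₃ : ℝ := -(gold*d₁) + (-1 + gold)*d₂ + 2*d₃ - 2*d₄ with hb₃def
    set b₄ : ℝ := (-1 + 2*gold)*d₁ + (1 - 2*gold)*d₂ - 2*d₃ + 2*(2*d₄) with hb₄def
    have hb₁ : c₁ = γ * b₁ := by
      rw [hb₁def]
      linear_combination 2*t₁ - t₂ - gold*t₃ + (-1 + 2*gold)*t₄ + (2*c₁ - 2*c₂)*goldSq
    have hb₂ : c₂ = γ * b₂ := by
      rw [hb₂def]
      linear_combination -t₁ + 2*t₂ + (-1 + gold)*t₃ + (1 - 2*gold)*t₄ + (-2*c₁ + 2*c₂)*goldSq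
    have hb₃ : c₃ = γ * b₃ := by
      rw [hb₃def]
      linear_combination -gold*t₁ + (-1 + gold)*t₂ + 2*t₃ - 2*t₄ + (-2*c₄)*goldSq
    have hb₄ : c₄ = γ * b₄ := by
      rw [hb₄def]
      linear_combination (-1 + 2*gold)*t₁ + (1 - 2*gold)*t₂ - 2*t₃ + 4*t₄ + (4*c₄)*goldSq
    refine ⟨b₁ • e₁ + b₂ • e₂ + b₃ • e₃ + b₄ • e₄, ⟨b₁, b₂, b₃, b₄, ?_, ?_, ?_, ?_, rfl⟩, ?_⟩
    · rw [hb₁def]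
      repeat
        first
        | exact hd₁ | exact hd₂ | exact hd₃ | exact hd₄
        | exact inO_gold | exact inO_two | exact inO_one
        | apply inO_add | apply inO_sub | apply inO_mul | apply inO_neg
    · rw [hb₂def]
      repeat
        first
        | exact hd₁ | exact hd₂ | exact hd₃ | exact hd₄
        | exact inO_gold | exact inO_two | exact inO_one
        | apply inO_add | apply inO_sub | apply inO_mul | apply inO_neg
    · rw [hb₃def]
      repeat
        first
        | exact hd₁ | exact hd₂ | exact hd₃ | exact hd₄
        | exact inO_gold | exact inO_two | exact inO_one
        | apply inO_add | apply inO_sub | apply inO_mul | apply inO_neg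
    · rw [hb₄def]
      repeat
        first
        | exact hd₁ | exact hd₂ | exact hd₃ | exact hd₄
        | exact inO_gold | exact inO_two | exact inO_one
        | apply inO_add | apply inO_sub | apply inO_mul | apply inO_neg
    · rw [hb₁, hb₂, hb₃, hb₄]
      simp only [smul_add, smul_smul]


end
end
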